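/- Binary example, secret-key rate: Let X be uniform on {0,1}; let Y = X if E₁ = 0 and Y = e (erasure) if E₁ = 1, where E₁ ~ Bernoulli(p); let Z = Y if E₂ = 0 and Z = e if E₂ = 1, where E₂ ~ Bernoulli(q); and let V = X ⊕ N where N ~ Bernoulli(α) with α ∈ [0,1/2]; X, E₁, E₂, N mutually independent. Then I(V;Y) − I(V;Z) = q(1−p)(1 − h(α)). -/
import Mathlib


open Finset Real

/- Probability mass of the event `X = x` under the pmf `μ` on a finite sample space. -/
open Classical in
noncomputable def pmass {Ω α : Type*} [Fintype Ω] (μ : Ω → ℝ) (X : Ω → α) (x : α) : ℝ :=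
  ∑ ω, if X ω = x then μ ω else 0

/-- Shannon entropy (in bits) of the random variable `X` under the pmf `μ`. -/
noncomputable def ent {Ω α : Type*} [Fintype Ω] [Fintype α] (μ : Ω → ℝ) (X : Ω → α) : ℝ :=
  ∑ x, -(pmass μ X x * Real.logb 2 (pmass μ X x))

/-- Conditional Shannon entropy `H(X | Y)` (in bits). -/
noncomputable def condEnt {Ω α β : Type*} [Fintype Ω] [Fintype α] [Fintype β]
    (μ : Ω → ℝ) (X : Ω → α) (Y : Ω → β) : ℝ :=
  ent μ (fun ω => (X ω, Y ω)) - ent μ Y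

/-- Mutual information `I(X;Y)` (in bits). -/
noncomputable def mutInf {Ω α β : Type*} [Fintype Ω] [Fintype α] [Fintype β]
    (μ : Ω → ℝ) (X : Ω → α) (Y : Ω → β) : ℝ :=
  ent μ X + ent μ Y - ent μ (fun ω => (X ω, Y ω))

/-- Conditional mutual information `I(X;Y|Z)` (in bits). -/
noncomputable def condMutInf {Ω α β γ : Type*} [Fintype Ω] [Fintype α] [Fintype β] [Fintype γ]
    (μ : Ω → ℝ) (X : Ω → α) (Y : Ω → β) (Z : Ω → γ) : ℝ :=
  ent μ (fun ω => (X ω, Z ω)) + ent μ (fun ω => (Y ω, Z ω))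
    - ent μ (fun ω => (X ω, Y ω, Z ω)) - ent μ Z

/- Probability of the event `A` under the pmf `μ`. -/
open Classical in
noncomputable def prob {Ω : Type*} [Fintype Ω] (μ : Ω → ℝ) (A : Ω → Prop) : ℝ :=
  ∑ ω, if A ω then μ ω else 0

/-- `μ` is a probability mass function on the finite set `Ω`. -/
def IsPMF {Ω : Type*} [Fintype Ω] (μ : Ω → ℝ) : Prop :=
  (∀ ω, 0 ≤ μ ω) ∧ ∑ ω, μ ω = 1

/-- Binary entropy function (bits). -/
noncomputable def binH (t : ℝ) : ℝ :=
  -(t * Real.logb 2 t) - (1 - t) * Real.logb 2 (1 - t)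
/-- Joint pmf of `(X, E₁, E₂, N)`: `X ∼ Bernoulli(1/2)`, `E₁ ∼ Bernoulli(p)`,
`E₂ ∼ Bernoulli(q)`, `N ∼ Bernoulli(α)`, mutually independent. -/
noncomputable def binDist (p q α : ℝ) : Bool × Bool × Bool × Bool → ℝ :=
  fun ω => (1 / 2 : ℝ) * (if ω.2.1 = true then p else 1 - p) *
    (if ω.2.2.1 = true then q else 1 - q) * (if ω.2.2.2 = true then α else 1 - α)

/-- The source `X`. -/
def Xb (ω : Bool × Bool × Bool × Bool) : Bool := ω.1

/-- `Y = X` if `E₁ = 0`, and `Y = e` (erasure) if `E₁ = 1`. -/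
def Yb (ω : Bool × Bool × Bool × Bool) : Option Bool :=
  if ω.2.1 = true then none else some ω.1

/-- `Z = Y` if `E₂ = 0`, and `Z = e` (erasure) if `E₂ = 1`. -/
def Zb (ω : Bool × Bool × Bool × Bool) : Option Bool :=
  if (ω.2.1 || ω.2.2.1) = true then none else some ω.1

/-- `V = X ⊕ N`. -/
def Vb (ω : Bool × Bool × Bool × Bool) : Bool := xor ω.1 ω.2.2.2

section Aux

lemma phi_mul' (a b : ℝ) : (a*b) * Real.logb 2 (a*b)
    = b*(a * Real.logb 2 a) + a*(b * Real.logb 2 b) := by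
  rcases eq_or_ne a 0 with ha | ha
  · simp [ha]
  rcases eq_or_ne b 0 with hb | hb
  · simp [hb]
  unfold Real.logb
  rw [Real.log_mul ha hb]
  ring

lemma phi_half' (x : ℝ) : (x/2) * Real.logb 2 (x/2) = (x * Real.logb 2 x - x)/2 := by
  have h : x/2 = x * (1/2) := by ring
  rw [h, phi_mul']
  have h2 : Real.logb 2 (1/2) = -1 := by
    rw [one_div, Real.logb_inv, Real.logb_self_eq_one] <;> norm_num
  rw [h2]; ring

variable (p q α : ℝ)

lemma pY_none' : pmass (binDist p q α) Yb none = p := by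
  simp [pmass, Yb, binDist, Fintype.sum_prod_type, Fintype.sum_bool]; ring

lemma pY_some' (b : Bool) : pmass (binDist p q α) Yb (some b) = (1-p)/2 := by
  cases b <;> (simp [pmass, Yb, binDist, Fintype.sum_prod_type, Fintype.sum_bool]; ring)

lemma pVY_none' (v : Bool) :
    pmass (binDist p q α) (fun ω => (Vb ω, Yb ω)) (v, none) = p/2 := by
  cases v <;> (simp [pmass, Yb, Vb, binDist, Fintype.sum_prod_type, Fintype.sum_bool]; ring)

lemma pVY_eq' (v : Bool) :
    pmass (binDist p q α) (fun ω => (Vb ω, Yb ω)) (v, some v) = ((1-p)*(1-α))/2 := by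
  cases v <;> (simp [pmass, Yb, Vb, binDist, Fintype.sum_prod_type, Fintype.sum_bool]; ring)

lemma pVY_tf' :
    pmass (binDist p q α) (fun ω => (Vb ω, Yb ω)) (true, some false) = ((1-p)*α)/2 := by
  simp [pmass, Yb, Vb, binDist, Fintype.sum_prod_type, Fintype.sum_bool]; ring

lemma pVY_ft' :
    pmass (binDist p q α) (fun ω => (Vb ω, Yb ω)) (false, some true) = ((1-p)*α)/2 := by
  simp [pmass, Yb, Vb, binDist, Fintype.sum_prod_type, Fintype.sum_bool]; ring

lemma pZ_none' : pmass (binDist p q α) Zb none = p + (1-p)*q := by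
  simp [pmass, Zb, binDist, Fintype.sum_prod_type, Fintype.sum_bool]; ring

lemma pZ_some' (b : Bool) : pmass (binDist p q α) Zb (some b) = ((1-p)*(1-q))/2 := by
  cases b <;> (simp [pmass, Zb, binDist, Fintype.sum_prod_type, Fintype.sum_bool]; ring)

lemma pVZ_none' (v : Bool) :
    pmass (binDist p q α) (fun ω => (Vb ω, Zb ω)) (v, none) = (p + (1-p)*q)/2 := by
  cases v <;> (simp [pmass, Zb, Vb, binDist, Fintype.sum_prod_type, Fintype.sum_bool]; ring)

lemma pVZ_eq' (v : Bool) :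
    pmass (binDist p q α) (fun ω => (Vb ω, Zb ω)) (v, some v) = ((1-p)*(1-q)*(1-α))/2 := by
  cases v <;> (simp [pmass, Zb, Vb, binDist, Fintype.sum_prod_type, Fintype.sum_bool]; ring)

lemma pVZ_tf' :
    pmass (binDist p q α) (fun ω => (Vb ω, Zb ω)) (true, some false) = ((1-p)*(1-q)*α)/2 := by
  simp [pmass, Zb, Vb, binDist, Fintype.sum_prod_type, Fintype.sum_bool]; ring

lemma pVZ_ft' :
    pmass (binDist p q α) (fun ω => (Vb ω, Zb ω)) (false, some true) = ((1-p)*(1-q)*α)/2 := by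
  simp [pmass, Zb, Vb, binDist, Fintype.sum_prod_type, Fintype.sum_bool]; ring

lemma entY' : ent (binDist p q α) Yb
    = -(p * Real.logb 2 p) - ((1-p) * Real.logb 2 (1-p)) + (1-p) := by
  rw [ent, Fintype.sum_option, Fintype.sum_bool]
  simp only [pY_none', pY_some', phi_half']
  ring

lemma entVY' : ent (binDist p q α) (fun ω => (Vb ω, Yb ω))
    = -(p * Real.logb 2 p) - ((1-p) * Real.logb 2 (1-p))
      - (1-p)*(α * Real.logb 2 α + (1-α) * Real.logb 2 (1-α)) + 1 := by
  rw [ent, Fintype.sum_prod_type, Fintype.sum_bool, Fintype.sum_option, Fintype.sum_option,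
    Fintype.sum_bool, Fintype.sum_bool]
  simp only [pVY_none', pVY_eq', pVY_tf', pVY_ft', phi_half', phi_mul']
  ring

lemma entZ' : ent (binDist p q α) Zb
    = -((p+(1-p)*q) * Real.logb 2 (p+(1-p)*q))
      - (1-p)*(1-q)*Real.logb 2 (1-p) - (1-p)*(1-q)*Real.logb 2 (1-q)
      + (1-p)*(1-q) := by
  rw [ent, Fintype.sum_option, Fintype.sum_bool]
  simp only [pZ_none', pZ_some', phi_half', phi_mul']
  ring

lemma entVZ' : ent (binDist p q α) (fun ω => (Vb ω, Zb ω))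
    = -((p+(1-p)*q) * Real.logb 2 (p+(1-p)*q))
      - (1-p)*(1-q)*Real.logb 2 (1-p) - (1-p)*(1-q)*Real.logb 2 (1-q)
      - (1-p)*(1-q)*(α * Real.logb 2 α + (1-α) * Real.logb 2 (1-α))
      + (p+(1-p)*q) + (1-p)*(1-q) := by
  rw [ent, Fintype.sum_prod_type, Fintype.sum_bool, Fintype.sum_option, Fintype.sum_option,
    Fintype.sum_bool, Fintype.sum_bool]
  simp only [pVZ_none', pVZ_eq', pVZ_tf', pVZ_ft', phi_half', phi_mul']
  ring

end Aux

/-- **Binary example, secret-key rate.**  With `X ∼ Bernoulli(1/2)`, `Y` an erased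
version of `X` (erasure prob. `p`), `Z` an erased version of `Y` (erasure prob. `q`) and
`V = X ⊕ N`, `N ∼ Bernoulli(α)`:  `I(V;Y) − I(V;Z) = q(1−p)(1−h(α))`. -/
theorem binary_keyrate (p q α : ℝ) (hp0 : 0 ≤ p) (hp1 : p ≤ 1) (hq0 : 0 ≤ q) (hq1 : q ≤ 1)
    (hα0 : 0 ≤ α) (hα1 : α ≤ 1 / 2) :
    mutInf (binDist p q α) Vb Yb - mutInf (binDist p q α) Vb Zb
      = q * (1 - p) * (1 - binH α) := by
  simp only [mutInf, entY', entVY', entZ', entVZ', binH]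
  ring
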